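/- Let ρ > 0, α > 0, and x = αe ∈ ℝⁿ where e is the all-ones vector. Then prox_{(1/ρ)h₂}(x) = {αe} if ρα² > 2; prox_{(1/ρ)h₂}(x) = {0} ∪ {α‖w‖₁ w : w ∈ S^{n-1}_+} if ρα² = 2; and prox_{(1/ρ)h₂}(x) = {0} if ρα² < 2. -/

import Mathlib

/-- The ℓ₁ norm on `ℝⁿ`. -/
noncomputable def l1norm {n : ℕ} (x : Fin n → ℝ) : ℝ := ∑ i, |x i|

/-- The ℓ₂ norm on `ℝⁿ`. -/
noncomputable def l2norm {n : ℕ} (x : Fin n → ℝ) : ℝ := Real.sqrt (∑ i, (x i) ^ 2)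

-- `h₂(x) = (‖x‖₁/‖x‖₂)²` for `x ≠ 0`, and `h₂(0) = 0`.
open Classical in
noncomputable def h2 {n : ℕ} (x : Fin n → ℝ) : ℝ :=
  if x = 0 then 0 else (l1norm x / l2norm x) ^ 2

/-- `prox_{(1/ρ) f}(z)`: the set of global minimizers of `(ρ/2)‖u - z‖₂² + f(u)`. -/
noncomputable def proxSet {n : ℕ} (ρ : ℝ) (f : (Fin n → ℝ) → ℝ) (z : Fin n → ℝ) :
    Set (Fin n → ℝ) :=
  {u | ∀ v : Fin n → ℝ,
    ρ / 2 * (∑ i, (u i - z i) ^ 2) + f u ≤ ρ / 2 * (∑ i, (v i - z i) ^ 2) + f v}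

namespace Stmt4Aux

variable {n : ℕ}

lemma ne_zero_exists {u : Fin n → ℝ} (hu : u ≠ 0) : ∃ i, u i ≠ 0 := by
  by_contra h; push_neg at h; exact hu (funext fun i => h i)

lemma Q_pos {u : Fin n → ℝ} (hu : u ≠ 0) : 0 < ∑ i, u i ^ 2 := by
  obtain ⟨i, hi⟩ := ne_zero_exists hu
  have h1 : 0 < u i ^ 2 := by positivity
  exact lt_of_lt_of_le h1 (Finset.single_le_sum (f := fun j => u j ^ 2)
    (fun j _ => sq_nonneg _) (Finset.mem_univ i))

lemma S_nonneg (u : Fin n → ℝ) : 0 ≤ ∑ i, |u i| :=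
  Finset.sum_nonneg fun i _ => abs_nonneg _

lemma Q_le_S_sq (u : Fin n → ℝ) : ∑ i, u i ^ 2 ≤ (∑ i, |u i|) ^ 2 := by
  calc ∑ i, u i ^ 2 = ∑ i, |u i| * |u i| := by
        refine Finset.sum_congr rfl fun i _ => ?_
        rw [← sq_abs, sq]
    _ ≤ ∑ i, |u i| * (∑ j, |u j|) := by
        refine Finset.sum_le_sum fun i _ => ?_
        exact mul_le_mul_of_nonneg_left
          (Finset.single_le_sum (fun j _ => abs_nonneg (u j)) (Finset.mem_univ i)) (abs_nonneg _)
    _ = (∑ i, |u i|) ^ 2 := by rw [← Finset.sum_mul]; ring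

lemma T_sq_le_S_sq (u : Fin n → ℝ) : (∑ i, u i) ^ 2 ≤ (∑ i, |u i|) ^ 2 := by
  have h1 : |∑ i, u i| ≤ ∑ i, |u i| := Finset.abs_sum_le_sum_abs _ _
  have h2 := abs_le.mp h1
  nlinarith [h2.1, h2.2]

lemma ident (u : Fin n → ℝ) :
    ∑ i, ((n : ℝ) * u i - ∑ j, u j) ^ 2
      = n * ((n : ℝ) * (∑ i, u i ^ 2) - (∑ i, u i) ^ 2) := by
  have h1 : ∀ i : Fin n, ((n : ℝ) * u i - ∑ j, u j) ^ 2
      = (n : ℝ) ^ 2 * u i ^ 2 - 2 * n * (∑ j, u j) * u i + (∑ j, u j) ^ 2 := by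
    intro i; ring
  rw [Finset.sum_congr rfl fun i _ => h1 i]
  rw [Finset.sum_add_distrib, Finset.sum_sub_distrib, ← Finset.mul_sum, ← Finset.mul_sum,
    Finset.sum_const, Finset.card_fin, nsmul_eq_mul]
  ring

lemma cauchy_T {u : Fin n → ℝ} (hn : 0 < n) : (∑ i, u i) ^ 2 ≤ (n : ℝ) * ∑ i, u i ^ 2 := by
  have h1 : (0:ℝ) ≤ ∑ i, ((n : ℝ) * u i - ∑ j, u j) ^ 2 :=
    Finset.sum_nonneg fun i _ => sq_nonneg _
  rw [ident] at h1
  have hn' : (0:ℝ) < n := by exact_mod_cast hn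
  nlinarith

lemma h2_zero : h2 (0 : Fin n → ℝ) = 0 := if_pos rfl

lemma h2_ne {u : Fin n → ℝ} (hu : u ≠ 0) :
    h2 u = (∑ i, |u i|) ^ 2 / (∑ i, u i ^ 2) := by
  rw [h2, if_neg hu, l1norm, l2norm, div_pow,
    Real.sq_sqrt (Finset.sum_nonneg fun i _ => sq_nonneg _)]

lemma expand (u : Fin n → ℝ) (α : ℝ) :
    ∑ i, (u i - α) ^ 2 = ∑ i, u i ^ 2 - 2 * α * (∑ i, u i) + n * α ^ 2 := by
  have h1 : ∀ i : Fin n, (u i - α) ^ 2 = u i ^ 2 - 2 * α * u i + α ^ 2 := fun i => by ring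
  rw [Finset.sum_congr rfl fun i _ => h1 i]
  rw [Finset.sum_add_distrib, Finset.sum_sub_distrib, ← Finset.mul_sum,
    Finset.sum_const, Finset.card_fin, nsmul_eq_mul]

/-- Core identity relative to `F 0 = ρ/2 * n * α²`. -/
lemma core0 (ρ α : ℝ) {u : Fin n → ℝ} (hu : u ≠ 0) :
    ρ / 2 * (∑ i, (u i - α) ^ 2) + h2 u
      = ρ / 2 * ((n : ℝ) * α ^ 2)
        + (ρ / 2 * ((∑ i, u i ^ 2) - α * (∑ i, u i)) ^ 2
            + ((∑ i, |u i|) ^ 2 - ρ * α ^ 2 / 2 * (∑ i, u i) ^ 2)) / (∑ i, u i ^ 2) := by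
  have hQ := Q_pos hu
  rw [h2_ne hu, expand]
  field_simp
  ring

/-- Core identity relative to `n`. -/
lemma coren (ρ α : ℝ) {u : Fin n → ℝ} (hu : u ≠ 0) :
    ρ / 2 * (∑ i, (u i - α) ^ 2) + h2 u
      = (n : ℝ)
        + (ρ / 2 * ((∑ i, u i ^ 2) - α * (∑ i, u i)) ^ 2
            + (ρ * α ^ 2 / 2 - 1) * ((n : ℝ) * (∑ i, u i ^ 2) - (∑ i, u i) ^ 2)
            + ((∑ i, |u i|) ^ 2 - (∑ i, u i) ^ 2)) / (∑ i, u i ^ 2) := by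
  have hQ := Q_pos hu
  rw [h2_ne hu, expand]
  field_simp
  ring

lemma n_pos_of_ne {u : Fin n → ℝ} (hu : u ≠ 0) : 0 < n := by
  rcases Nat.eq_zero_or_pos n with h | h
  · subst h; exact absurd (funext fun i => i.elim0) hu
  · exact h

lemma F0_eval (ρ α : ℝ) :
    ρ / 2 * (∑ i : Fin n, ((0 : Fin n → ℝ) i - α) ^ 2) + h2 (0 : Fin n → ℝ)
      = ρ / 2 * ((n : ℝ) * α ^ 2) := by
  rw [h2_zero, add_zero]
  congr 1
  simpa using expand (0 : Fin n → ℝ) α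

lemma Fx_eval (ρ α : ℝ) (hn : 0 < n) (hα : 0 < α) :
    ρ / 2 * (∑ _i : Fin n, (α - α) ^ 2) + h2 (fun _ : Fin n => α) = (n : ℝ) := by
  have hx : (fun _ : Fin n => α) ≠ 0 := by
    intro h
    have := congrFun h ⟨0, hn⟩
    simp at this
    exact absurd this (ne_of_gt hα)
  rw [h2_ne hx]
  have h1 : ∑ _i : Fin n, |α| = (n : ℝ) * α := by
    simp [abs_of_pos hα, Finset.sum_const, mul_comm]
  have h2' : ∑ _i : Fin n, α ^ 2 = (n : ℝ) * α ^ 2 := by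
    simp [Finset.sum_const, mul_comm]
  rw [h1, h2']
  have hn' : (0 : ℝ) < n := by exact_mod_cast hn
  simp only [sub_self]
  rw [Finset.sum_const]
  field_simp
  ring

/-- `F 0 ≤ F v` whenever `ρα² ≤ 2`. -/
lemma Fle0 {ρ α : ℝ} (hρ : 0 < ρ) (hc : ρ * α ^ 2 ≤ 2) (v : Fin n → ℝ) :
    ρ / 2 * ((n : ℝ) * α ^ 2) ≤ ρ / 2 * (∑ i, (v i - α) ^ 2) + h2 v := by
  by_cases hv : v = 0
  · subst hv
    rw [h2_zero, add_zero]
    have := expand (0 : Fin n → ℝ) α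
    simp only [Pi.zero_apply] at this ⊢
    rw [this]; simp
  · rw [core0 ρ α hv]
    have hQ := Q_pos hv
    have h1 := T_sq_le_S_sq v
    have h2' : (0:ℝ) ≤ ρ / 2 * ((∑ i, v i ^ 2) - α * (∑ i, v i)) ^ 2 := by positivity
    have h3 : (0:ℝ) ≤ (∑ i, |v i|) ^ 2 - ρ * α ^ 2 / 2 * (∑ i, v i) ^ 2 := by
      nlinarith [sq_nonneg (∑ i, v i)]
    have h4 : (0:ℝ) ≤ (ρ / 2 * ((∑ i, v i ^ 2) - α * (∑ i, v i)) ^ 2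
        + ((∑ i, |v i|) ^ 2 - ρ * α ^ 2 / 2 * (∑ i, v i) ^ 2)) / (∑ i, v i ^ 2) := by
      apply div_nonneg (by linarith) hQ.le
    linarith

/-- strict version when `ρα² < 2` and `v ≠ 0`. -/
lemma Flt0 {ρ α : ℝ} (hρ : 0 < ρ) (hc : ρ * α ^ 2 < 2) {v : Fin n → ℝ} (hv : v ≠ 0) :
    ρ / 2 * ((n : ℝ) * α ^ 2) < ρ / 2 * (∑ i, (v i - α) ^ 2) + h2 v := by
  rw [core0 ρ α hv]
  have hQ := Q_pos hv
  have h1 := T_sq_le_S_sq v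
  have h0 := Q_le_S_sq v
  have h2' : (0:ℝ) ≤ ρ / 2 * ((∑ i, v i ^ 2) - α * (∑ i, v i)) ^ 2 := by positivity
  have hca : 0 ≤ ρ * α ^ 2 := by positivity
  have h3 : (0:ℝ) < (∑ i, |v i|) ^ 2 - ρ * α ^ 2 / 2 * (∑ i, v i) ^ 2 := by
    nlinarith [sq_nonneg (∑ i, v i)]
  have h4 : (0:ℝ) < (ρ / 2 * ((∑ i, v i ^ 2) - α * (∑ i, v i)) ^ 2
      + ((∑ i, |v i|) ^ 2 - ρ * α ^ 2 / 2 * (∑ i, v i) ^ 2)) / (∑ i, v i ^ 2) :=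
    div_pos (by linarith) hQ
  linarith

/-- `n ≤ F v` whenever `2 ≤ ρα²`. -/
lemma Fge_n {ρ α : ℝ} (hρ : 0 < ρ) (hc : 2 ≤ ρ * α ^ 2) (v : Fin n → ℝ) :
    (n : ℝ) ≤ ρ / 2 * (∑ i, (v i - α) ^ 2) + h2 v := by
  by_cases hv : v = 0
  · subst hv
    have h1 := F0_eval (n := n) ρ α
    rw [h1]
    have hn : (0:ℝ) ≤ n := Nat.cast_nonneg n
    nlinarith
  · rw [coren ρ α hv]
    have hQ := Q_pos hv
    have h1 := T_sq_le_S_sq v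
    have hcau := cauchy_T (u := v) (n_pos_of_ne hv)
    have h2' : (0:ℝ) ≤ ρ / 2 * ((∑ i, v i ^ 2) - α * (∑ i, v i)) ^ 2 := by positivity
    have h3 : (0:ℝ) ≤ (ρ * α ^ 2 / 2 - 1) * ((n : ℝ) * (∑ i, v i ^ 2) - (∑ i, v i) ^ 2) := by
      apply mul_nonneg (by linarith) (by linarith)
    have h4 : (0:ℝ) ≤ (ρ / 2 * ((∑ i, v i ^ 2) - α * (∑ i, v i)) ^ 2
        + (ρ * α ^ 2 / 2 - 1) * ((n : ℝ) * (∑ i, v i ^ 2) - (∑ i, v i) ^ 2)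
        + ((∑ i, |v i|) ^ 2 - (∑ i, v i) ^ 2)) / (∑ i, v i ^ 2) :=
      div_nonneg (by linarith) hQ.le
    linarith

end Stmt4Aux

open Stmt4Aux

theorem stmt_4 {n : ℕ} (ρ α : ℝ) (hρ : 0 < ρ) (hα : 0 < α) :
    (2 < ρ * α ^ 2 → proxSet ρ h2 (fun _ : Fin n => α) = {fun _ => α}) ∧
    (ρ * α ^ 2 = 2 → proxSet ρ h2 (fun _ : Fin n => α) =
      {0} ∪ {u | ∃ w : Fin n → ℝ,
        (∑ i, (w i) ^ 2 = 1) ∧ (∀ i, 0 ≤ w i) ∧ u = (α * l1norm w) • w}) ∧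
    (ρ * α ^ 2 < 2 → proxSet ρ h2 (fun _ : Fin n => α) = {0}) := by
  refine ⟨?_, ?_, ?_⟩
  -- ===================== case ρα² > 2 =====================
  · intro hc
    rcases Nat.eq_zero_or_pos n with hn | hn
    · subst hn
      ext u
      simp only [proxSet, Set.mem_setOf_eq, Set.mem_singleton_iff]
      constructor
      · intro _; exact funext fun i => i.elim0
      · intro _ v
        have huv : u = v := funext fun i => i.elim0
        rw [huv]
    · ext u
      simp only [proxSet, Set.mem_setOf_eq, Set.mem_singleton_iff]
      constructor
      · intro hu
        have h1 : ρ / 2 * (∑ i, (u i - α) ^ 2) + h2 u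
            ≤ ρ / 2 * (∑ _i : Fin n, (α - α) ^ 2) + h2 (fun _ : Fin n => α) :=
          hu (fun _ => α)
        rw [Fx_eval ρ α hn hα] at h1
        by_cases hu0 : u = 0
        · exfalso
          rw [hu0, F0_eval ρ α] at h1
          have hn' : (1:ℝ) ≤ n := by exact_mod_cast hn
          nlinarith
        · rw [coren ρ α hu0] at h1
          have hQ := Q_pos hu0
          have hN : ρ / 2 * ((∑ i, u i ^ 2) - α * (∑ i, u i)) ^ 2
              + (ρ * α ^ 2 / 2 - 1) * ((n : ℝ) * (∑ i, u i ^ 2) - (∑ i, u i) ^ 2)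
              + ((∑ i, |u i|) ^ 2 - (∑ i, u i) ^ 2) ≤ 0 := by
            by_contra h
            push_neg at h
            have := div_pos h hQ
            linarith
          have k1 : (0:ℝ) ≤ ρ / 2 * ((∑ i, u i ^ 2) - α * (∑ i, u i)) ^ 2 := by positivity
          have kc := cauchy_T (u := u) hn
          have k2 : (0:ℝ) ≤ (ρ * α ^ 2 / 2 - 1) * ((n : ℝ) * (∑ i, u i ^ 2) - (∑ i, u i) ^ 2) :=
            mul_nonneg (by linarith) (by linarith)
          have k3 := T_sq_le_S_sq u
          have e2 : (n : ℝ) * (∑ i, u i ^ 2) - (∑ i, u i) ^ 2 = 0 := by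
            have hk2 : (ρ * α ^ 2 / 2 - 1) * ((n : ℝ) * (∑ i, u i ^ 2) - (∑ i, u i) ^ 2) = 0 :=
              le_antisymm (by linarith) k2
            exact (mul_eq_zero.mp hk2).resolve_left (ne_of_gt (by linarith))
          have e1 : (∑ i, u i ^ 2) = α * (∑ i, u i) := by
            have hk1 : ρ / 2 * ((∑ i, u i ^ 2) - α * (∑ i, u i)) ^ 2 = 0 :=
              le_antisymm (by linarith) k1
            have h5 := (mul_eq_zero.mp hk1).resolve_left (ne_of_gt (by positivity))
            have h6 := pow_eq_zero_iff two_ne_zero |>.mp h5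
            linarith
          have hconst : ∀ i, (n : ℝ) * u i = ∑ j, u j := by
            have hid := ident u
            rw [e2, mul_zero] at hid
            intro i
            have h8 := (Finset.sum_eq_zero_iff_of_nonneg
              (fun j _ => sq_nonneg ((n : ℝ) * u j - ∑ k, u k))).mp hid i (Finset.mem_univ i)
            have h9 := pow_eq_zero_iff two_ne_zero |>.mp h8
            linarith
          have hn' : (0:ℝ) < n := by exact_mod_cast hn
          have hT : 0 < ∑ i, u i := by nlinarith
          have hTval : ∑ i, u i = n * α := by
            have h10 : (n : ℝ) * (α * (∑ i, u i)) = (∑ i, u i) ^ 2 := by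
              rw [← e1]; linarith
            have h11 : ((∑ i, u i) - n * α) * (∑ i, u i) = 0 := by linear_combination -h10
            rcases mul_eq_zero.mp h11 with h | h
            · linarith
            · linarith
          funext i
          have h12 := hconst i
          rw [hTval] at h12
          have : u i = α := by
            have hn0 : (n : ℝ) ≠ 0 := by exact_mod_cast hn.ne'
            exact mul_left_cancel₀ hn0 h12
          exact this
      · intro hu v
        subst hu
        exact le_trans (le_of_eq (Fx_eval ρ α hn hα)) (Fge_n hρ hc.le v)
  -- ===================== case ρα² = 2 =====================
  · intro hc
    ext u
    simp only [proxSet, Set.mem_setOf_eq, Set.mem_union, Set.mem_singleton_iff,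
      Set.mem_setOf_eq]
    constructor
    · intro hu
      by_cases hu0 : u = 0
      · exact Or.inl hu0
      right
      have h1 : ρ / 2 * (∑ i, (u i - α) ^ 2) + h2 u
          ≤ ρ / 2 * (∑ i : Fin n, ((0 : Fin n → ℝ) i - α) ^ 2) + h2 (0 : Fin n → ℝ) := hu 0
      rw [F0_eval ρ α, core0 ρ α hu0] at h1
      have hQ := Q_pos hu0
      have hN : ρ / 2 * ((∑ i, u i ^ 2) - α * (∑ i, u i)) ^ 2
          + ((∑ i, |u i|) ^ 2 - ρ * α ^ 2 / 2 * (∑ i, u i) ^ 2) ≤ 0 := by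
        by_contra h
        push_neg at h
        have := div_pos h hQ
        linarith
      have hcc : ρ * α ^ 2 / 2 = 1 := by rw [hc]; norm_num
      rw [hcc, one_mul] at hN
      have k1 : (0:ℝ) ≤ ρ / 2 * ((∑ i, u i ^ 2) - α * (∑ i, u i)) ^ 2 := by positivity
      have k2 := T_sq_le_S_sq u
      have e1 : (∑ i, u i ^ 2) = α * (∑ i, u i) := by
        have hk1 : ρ / 2 * ((∑ i, u i ^ 2) - α * (∑ i, u i)) ^ 2 = 0 :=
          le_antisymm (by linarith) k1
        have h5 := (mul_eq_zero.mp hk1).resolve_left (ne_of_gt (by positivity))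
        have h6 := pow_eq_zero_iff two_ne_zero |>.mp h5
        linarith
      have e2 : (∑ i, |u i|) ^ 2 = (∑ i, u i) ^ 2 := le_antisymm (by linarith) k2
      have hT : 0 < ∑ i, u i := by nlinarith
      have hS : ∑ i, |u i| = ∑ i, u i := by
        have h5 : ((∑ i, |u i|) - ∑ i, u i) * ((∑ i, |u i|) + ∑ i, u i) = 0 := by
          linear_combination e2
        rcases mul_eq_zero.mp h5 with h6 | h6
        · linarith
        · have := S_nonneg u; linarith
      have hpos : ∀ i, 0 ≤ u i := by
        have hsum : ∑ i, (|u i| - u i) = 0 := by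
          rw [Finset.sum_sub_distrib]; linarith
        intro i
        have h7 := (Finset.sum_eq_zero_iff_of_nonneg
          (fun j _ => sub_nonneg.mpr (le_abs_self (u j)))).mp hsum i (Finset.mem_univ i)
        have := abs_nonneg (u i)
        linarith
      have hsq : 0 < Real.sqrt (∑ j, u j ^ 2) := Real.sqrt_pos.mpr hQ
      have hss : Real.sqrt (∑ j, u j ^ 2) * Real.sqrt (∑ j, u j ^ 2) = ∑ j, u j ^ 2 :=
        Real.mul_self_sqrt hQ.le
      refine ⟨fun i => u i / Real.sqrt (∑ j, u j ^ 2), ?_, ?_, ?_⟩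
      · rw [show ∑ i, (u i / Real.sqrt (∑ j, u j ^ 2)) ^ 2
            = (∑ i, u i ^ 2) / (∑ j, u j ^ 2) from ?_]
        · exact div_self (ne_of_gt hQ)
        · rw [Finset.sum_div]
          refine Finset.sum_congr rfl fun i _ => ?_
          rw [div_pow, Real.sq_sqrt hQ.le]
      · intro i; exact div_nonneg (hpos i) hsq.le
      · have hl1 : l1norm (fun i => u i / Real.sqrt (∑ j, u j ^ 2))
            = (∑ j, u j) / Real.sqrt (∑ j, u j ^ 2) := by
          rw [l1norm, Finset.sum_div]
          refine Finset.sum_congr rfl fun i _ => ?_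
          exact abs_of_nonneg (div_nonneg (hpos i) hsq.le)
        funext i
        rw [Pi.smul_apply, smul_eq_mul, hl1]
        have hrw : α * ((∑ j, u j) / Real.sqrt (∑ j, u j ^ 2))
              * (u i / Real.sqrt (∑ j, u j ^ 2))
            = (α * ∑ j, u j) * u i
              / (Real.sqrt (∑ j, u j ^ 2) * Real.sqrt (∑ j, u j ^ 2)) := by
          ring
        rw [hrw, hss, ← e1, mul_comm, mul_div_assoc, div_self (ne_of_gt hQ), mul_one]
    · intro hu v
      rcases hu with hu0 | ⟨w, hw1, hw0, rfl⟩
      · subst hu0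
        rw [F0_eval ρ α]
        exact Fle0 hρ hc.le v
      · have hw : w ≠ 0 := by
          intro h; rw [h] at hw1; simp at hw1
        have hls : l1norm w = ∑ i, w i := by
          rw [l1norm]; exact Finset.sum_congr rfl fun i _ => abs_of_nonneg (hw0 i)
        have hs1 : 1 ≤ ∑ i, w i := by
          have hq := Q_le_S_sq w
          rw [hw1] at hq
          have hsn := S_nonneg w
          have habs : ∑ i, |w i| = ∑ i, w i :=
            Finset.sum_congr rfl fun i _ => abs_of_nonneg (hw0 i)
          nlinarith
        have hspos : (0:ℝ) < ∑ i, w i := by linarith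
        have hu0 : (α * l1norm w) • w ≠ 0 := by
          obtain ⟨i, hi⟩ := ne_zero_exists hw
          intro h
          have h3 := congrFun h i
          rw [Pi.smul_apply, smul_eq_mul, hls, Pi.zero_apply] at h3
          have hwi : 0 < w i := lt_of_le_of_ne (hw0 i) (Ne.symm hi)
          nlinarith [mul_pos (mul_pos hα hspos) hwi]
        have hQu : ∑ i, ((α * l1norm w) • w) i ^ 2 = α ^ 2 * (∑ i, w i) ^ 2 := by
          have : ∀ i : Fin n, ((α * l1norm w) • w) i ^ 2
              = (α * ∑ j, w j) ^ 2 * w i ^ 2 := by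
            intro i; rw [Pi.smul_apply, smul_eq_mul, hls]; ring
          rw [Finset.sum_congr rfl fun i _ => this i, ← Finset.mul_sum, hw1]
          ring
        have hTu : ∑ i, ((α * l1norm w) • w) i = α * (∑ i, w i) * (∑ i, w i) := by
          have : ∀ i : Fin n, ((α * l1norm w) • w) i = (α * ∑ j, w j) * w i := by
            intro i; rw [Pi.smul_apply, smul_eq_mul, hls]
          rw [Finset.sum_congr rfl fun i _ => this i, ← Finset.mul_sum]
        have hSu : ∑ i, |((α * l1norm w) • w) i| = α * (∑ i, w i) * (∑ i, w i) := by
          have : ∀ i : Fin n, |((α * l1norm w) • w) i| = (α * ∑ j, w j) * w i := by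
            intro i
            rw [Pi.smul_apply, smul_eq_mul, hls]
            exact abs_of_nonneg (mul_nonneg (mul_nonneg hα.le hspos.le) (hw0 i))
          rw [Finset.sum_congr rfl fun i _ => this i, ← Finset.mul_sum]
        rw [core0 ρ α hu0, hQu, hTu, hSu]
        have hnum : ρ / 2 * (α ^ 2 * (∑ i, w i) ^ 2 - α * (α * (∑ i, w i) * (∑ i, w i))) ^ 2
            + ((α * (∑ i, w i) * (∑ i, w i)) ^ 2
              - ρ * α ^ 2 / 2 * (α * (∑ i, w i) * (∑ i, w i)) ^ 2) = 0 := by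
          linear_combination (-(α * (∑ i, w i) * (∑ i, w i)) ^ 2 / 2) * hc
        rw [hnum, zero_div, add_zero]
        exact Fle0 hρ hc.le v
  -- ===================== case ρα² < 2 =====================
  · intro hc
    ext u
    simp only [proxSet, Set.mem_setOf_eq, Set.mem_singleton_iff]
    constructor
    · intro hu
      by_contra hu0
      have h1 : ρ / 2 * (∑ i, (u i - α) ^ 2) + h2 u
          ≤ ρ / 2 * (∑ i : Fin n, ((0 : Fin n → ℝ) i - α) ^ 2) + h2 (0 : Fin n → ℝ) := hu 0
      rw [F0_eval ρ α] at h1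
      exact absurd h1 (not_le.mpr (Flt0 hρ hc hu0))
    · intro hu v
      subst hu
      rw [F0_eval ρ α]
      exact Fle0 hρ hc.le v
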